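/- Let DoG(x,y) = (A/γ²)·exp(-(x²+y²)/(2γ²σ²)) - A·exp(-(x²+y²)/(2σ²)) with σ > 0, 0 < γ < 1, A > 0 (equal coefficients). Then DoG(x,y) = 0 if and only if x² + y² = r² where r = 2γσ·√((-ln γ)/(1-γ²)). Equivalently, σ = (r/(2γ))·√((1-γ²)/(-ln γ)). -/

import Mathlib

open Real MeasureTheory

theorem dog_zero_set (σ γ A : ℝ) (hσ : 0 < σ) (hγ0 : 0 < γ) (hγ1 : γ < 1) (hA : 0 < A)
    (r : ℝ) (hr : r = 2 * γ * σ * Real.sqrt ((-Real.log γ) / (1 - γ ^ 2))) :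
    ∀ x y : ℝ,
      ((A / γ ^ 2) * Real.exp (-(x ^ 2 + y ^ 2) / (2 * γ ^ 2 * σ ^ 2)) -
          A * Real.exp (-(x ^ 2 + y ^ 2) / (2 * σ ^ 2)) = 0 ↔ x ^ 2 + y ^ 2 = r ^ 2) := by
  have hγ2 : (0:ℝ) < γ ^ 2 := by positivity
  have h1γ : (0:ℝ) < 1 - γ ^ 2 := by nlinarith
  have hlog : Real.log γ < 0 := Real.log_neg hγ0 hγ1
  have hlog' : 0 ≤ -Real.log γ := by linarith
  have hr2 : r ^ 2 = 4 * γ ^ 2 * σ ^ 2 * ((-Real.log γ) / (1 - γ ^ 2)) := by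
    rw [hr, mul_pow, Real.sq_sqrt (div_nonneg hlog' h1γ.le)]
    ring
  intro x y
  set s := x ^ 2 + y ^ 2 with hs
  have key : (A / γ ^ 2) * Real.exp (-s / (2 * γ ^ 2 * σ ^ 2)) -
      A * Real.exp (-s / (2 * σ ^ 2)) = 0 ↔
      -s / (2 * γ ^ 2 * σ ^ 2) = Real.log (γ ^ 2) + (-s / (2 * σ ^ 2)) := by
    rw [sub_eq_zero]
    constructor
    · intro h
      have hE : Real.exp (-s / (2 * γ ^ 2 * σ ^ 2)) =
          γ ^ 2 * Real.exp (-s / (2 * σ ^ 2)) := by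
        field_simp at h
        have e : -s / (2 * γ ^ 2 * σ ^ 2) = -(s / (γ ^ 2 * 2 * σ ^ 2)) := by ring
        rw [e, neg_div]; exact h
      have : Real.exp (-s / (2 * γ ^ 2 * σ ^ 2)) =
          Real.exp (Real.log (γ ^ 2) + (-s / (2 * σ ^ 2))) := by
        rw [Real.exp_add, Real.exp_log hγ2]; exact hE
      exact Real.exp_eq_exp.mp this
    · intro h
      rw [h, Real.exp_add, Real.exp_log hγ2]
      field_simp
  rw [key, hr2, Real.log_pow]
  have hσ2 : σ ^ 2 ≠ 0 := by positivity
  have hγ2' : γ ^ 2 ≠ 0 := ne_of_gt hγ2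
  have h1γ' : (1:ℝ) - γ ^ 2 ≠ 0 := ne_of_gt h1γ
  constructor
  · intro h
    field_simp at h ⊢
    have h2 : (2*σ^2) * (s*(1-γ^2) + 4*γ^2*σ^2*Real.log γ) = 0 := by push_cast at h; linear_combination (-2*σ^2) * h
    have h3 : s*(1-γ^2) + 4*γ^2*σ^2*Real.log γ = 0 := by
      rcases mul_eq_zero.mp h2 with h4 | h4
      · exfalso; have : (0:ℝ) < 2*σ^2 := by positivity
        linarith
      · exact h4
    linarith
  · intro h
    rw [h]
    field_simp
    ring
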